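/- Let G be a finite graph and τ a threshold function. Let u be a vertex with τ(u)=1 such that τ(v)=deg_G(v) for every neighbour v of u. If X is a non-monotone target set for (G,τ), then there exist (not necessarily distinct) neighbours v₁, v₂ of u with v₁ ∈ X and N_G(v₂) ⊆ X. -/

import Mathlib

open Finset

/-- The non-monotone activation process on `(G, τ)` starting with `X`:
`X_t = {u : |N_G(u) ∩ X_{t-1}| ≥ τ(u)}` for `t ≥ 1`. -/
def activation {V : Type*} (G : SimpleGraph V) [Fintype V] [DecidableEq V]
    [DecidableRel G.Adj] (τ : V → ℤ) (X : Finset V) : ℕ → Finset V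
  | 0 => X
  | t + 1 => Finset.univ.filter
      (fun u => τ u ≤ ((G.neighborFinset u ∩ activation G τ X t).card : ℤ))

/-- `X` is a non-monotone target set for `(G, τ)`. -/
def IsTargetSet {V : Type*} (G : SimpleGraph V) [Fintype V] [DecidableEq V]
    [DecidableRel G.Adj] (τ : V → ℤ) (X : Finset V) : Prop :=
  ∃ t₀ : ℕ, ∀ t ≥ t₀, activation G τ X t = Finset.univ

/-- Open neighbourhood of a set of vertices: `N_G(S)`. -/
def openNbhd {V : Type*} (G : SimpleGraph V) (S : Set V) : Set V :=
  {v | v ∉ S ∧ ∃ u ∈ S, G.Adj u v}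

/-- Closed neighbourhood of a set of vertices: `N_G[S]`. -/
def closedNbhd {V : Type*} (G : SimpleGraph V) (S : Set V) : Set V :=
  S ∪ openNbhd G S

/-- Closed neighbourhood, as a finset. -/
def closedNbhdFinset {V : Type*} (G : SimpleGraph V) [Fintype V] [DecidableEq V]
    [DecidableRel G.Adj] (U : Finset V) : Finset V :=
  U ∪ Finset.univ.filter (fun v => ∃ u ∈ U, G.Adj u v)

/-- `U` is the vertex set of a connected component of the subgraph of `G` induced by `S`. -/
def IsComponentOf {V : Type*} (G : SimpleGraph V) (S U : Set V) : Prop :=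
  U ⊆ S ∧ U.Nonempty ∧ (G.induce U).Connected ∧
    ∀ u ∈ U, ∀ v ∈ S, G.Adj u v → v ∈ U

/-- The subgraph of `G` induced by `S`, as a graph on the subtype `S`. -/
def restrict {V : Type*} (G : SimpleGraph V) (S : Set V) : SimpleGraph S where
  Adj a b := G.Adj a b
  symm := ⟨fun _ _ h => G.symm.symm _ _ h⟩
  loopless := ⟨fun a h => G.loopless.irrefl a h⟩

instance {V : Type*} (G : SimpleGraph V) (S : Set V) [h : DecidableRel G.Adj] :
    DecidableRel (restrict G S).Adj := fun a b => h a b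

theorem stmt_10 {V : Type*} [Fintype V] [DecidableEq V] (G : SimpleGraph V)
    [DecidableRel G.Adj] (τ : V → ℤ) (u : V)
    (hu : τ u = 1)
    (hnb : ∀ v, G.Adj u v → τ v = (G.degree v : ℤ))
    (X : Finset V) (hX : IsTargetSet G τ X) :
    ∃ v₁ v₂ : V, G.Adj u v₁ ∧ G.Adj u v₂ ∧ v₁ ∈ X ∧ G.neighborFinset v₂ ⊆ X := by
  obtain ⟨t₀, ht₀⟩ := hX
  -- from u ∈ X_{s+1} with v adjacent to u giving the witness v ∈ X_s property
  have extract : ∀ s, u ∈ activation G τ X (s + 1) →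
      ∃ v, G.Adj u v ∧ v ∈ activation G τ X s := by
    intro s hmem
    simp only [activation, mem_filter, hu] at hmem
    have hne : (G.neighborFinset u ∩ activation G τ X s).Nonempty := by
      rw [← card_pos]
      have h1 : (1:ℤ) ≤ ((G.neighborFinset u ∩ activation G τ X s).card : ℤ) := hmem.2
      exact_mod_cast lt_of_lt_of_le zero_lt_one h1
    obtain ⟨v, hv⟩ := hne
    rw [mem_inter, SimpleGraph.mem_neighborFinset] at hv
    exact ⟨v, hv.1, hv.2⟩
  -- from a neighbour v ∈ X_{s+1}: N(v) ⊆ X_s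
  have nbhd : ∀ s v, G.Adj u v → v ∈ activation G τ X (s + 1) →
      G.neighborFinset v ⊆ activation G τ X s := by
    intro s v hadj hv
    simp only [activation, mem_filter, hnb v hadj] at hv
    have hcard : (G.degree v : ℤ) ≤ ((G.neighborFinset v ∩ activation G τ X s).card : ℤ) :=
      hv.2
    have hle : (G.neighborFinset v).card ≤
        (G.neighborFinset v ∩ activation G τ X s).card := by
      rw [G.card_neighborFinset_eq_degree]; exact_mod_cast hcard
    have heq : G.neighborFinset v ∩ activation G τ X s = G.neighborFinset v :=
      eq_of_subset_of_card_le inter_subset_left hle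
    intro w hw
    have hw2 : w ∈ G.neighborFinset v ∩ activation G τ X s := by rw [heq]; exact hw
    exact (mem_inter.mp hw2).2
  -- key: u is in every activation set
  have key : ∀ t, u ∈ activation G τ X t := by
    intro t
    by_contra h
    have step : ∀ s, u ∉ activation G τ X s → u ∉ activation G τ X (s + 2) := by
      intro s hs hmem
      obtain ⟨v, hadj, hv⟩ := extract _ hmem
      exact hs (nbhd _ _ hadj hv (by rw [SimpleGraph.mem_neighborFinset]; exact hadj.symm))
    have h2 : ∀ k, u ∉ activation G τ X (t + 2 * k) := by
      intro k
      induction k with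
      | zero => simpa using h
      | succ n ih =>
          have := step _ ih
          have he : t + 2 * (n + 1) = t + 2 * n + 2 := by ring
          rwa [he]
    have huniv := ht₀ (t + 2 * t₀) (by omega)
    exact h2 t₀ (huniv ▸ mem_univ u)
  obtain ⟨v₁, hadj₁, hv₁⟩ := extract 0 (key 1)
  obtain ⟨v₂, hadj₂, hv₂⟩ := extract 1 (key 2)
  exact ⟨v₁, v₂, hadj₁, hadj₂, hv₁, nbhd 0 v₂ hadj₂ hv₂⟩
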